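/- Let μ > 0 satisfy 2 cos μ = μ sin μ, and define U(x) = sin((1+x)μ) for x ∈ [−1,0] and V(x) = sin((1−x)μ) for x ∈ [0,1]. Then U''(x) = −μ² U(x) on (−1,0), V''(x) = −μ² V(x) on (0,1), U(−1) = 0, V(1) = 0, U(0) = V(0) = sin μ ≠ 0, and the point-mass interface condition V'(0) − U'(0) = −μ² sin μ holds. -/

import Mathlib

open Real Set

private lemma hasDerivU (μ x : ℝ) :
    HasDerivAt (fun x => Real.sin ((1 + x) * μ)) (Real.cos ((1 + x) * μ) * μ) x := by
  have h : HasDerivAt (fun x : ℝ => (1 + x) * μ) (1 * μ) x :=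
    ((hasDerivAt_id x).const_add 1).mul_const μ
  simpa [Function.comp_def] using (Real.hasDerivAt_sin _).comp x h

private lemma hasDerivU' (μ x : ℝ) :
    HasDerivAt (fun x => Real.cos ((1 + x) * μ) * μ)
      (-Real.sin ((1 + x) * μ) * μ * μ) x := by
  have h : HasDerivAt (fun x : ℝ => (1 + x) * μ) (1 * μ) x :=
    ((hasDerivAt_id x).const_add 1).mul_const μ
  simpa using ((Real.hasDerivAt_cos _).comp x h).mul_const μ

private lemma hasDerivV (μ x : ℝ) :
    HasDerivAt (fun x => Real.sin ((1 - x) * μ)) (Real.cos ((1 - x) * μ) * (-μ)) x := by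
  have h : HasDerivAt (fun x : ℝ => (1 - x) * μ) ((-1) * μ) x := by
    simpa [sub_eq_add_neg] using (((hasDerivAt_id x).neg).const_add 1).mul_const μ
  simpa [Function.comp_def] using (Real.hasDerivAt_sin _).comp x h

private lemma hasDerivV' (μ x : ℝ) :
    HasDerivAt (fun x => Real.cos ((1 - x) * μ) * (-μ))
      (-Real.sin ((1 - x) * μ) * μ * μ) x := by
  have h : HasDerivAt (fun x : ℝ => (1 - x) * μ) ((-1) * μ) x := by
    simpa [sub_eq_add_neg] using (((hasDerivAt_id x).neg).const_add 1).mul_const μ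
  have := ((Real.hasDerivAt_cos _).comp x h).mul_const (-μ)
  exact this.congr_deriv (by ring)

/-- If `μ > 0` satisfies the Dirichlet characteristic equation `2 cos μ = μ sin μ`, then
`U(x) = sin((1+x)μ)` and `V(x) = sin((1−x)μ)` solve the eigenvalue problem with eigenvalue
`−μ²`, clamped ends, continuity at `0` with nonzero point-mass value `sin μ`, and the
point-mass interface condition `V'(0) − U'(0) = −μ² sin μ`. -/
theorem dirichlet_eigenfunction_properties (μ : ℝ) (hμ : 0 < μ)
    (hchar : 2 * Real.cos μ = μ * Real.sin μ) :
    let U : ℝ → ℝ := fun x => Real.sin ((1 + x) * μ)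
    let V : ℝ → ℝ := fun x => Real.sin ((1 - x) * μ)
    (∀ x ∈ Ioo (-1 : ℝ) 0, deriv (deriv U) x = -μ ^ 2 * U x) ∧
    (∀ x ∈ Ioo (0 : ℝ) 1, deriv (deriv V) x = -μ ^ 2 * V x) ∧
    U (-1) = 0 ∧ V 1 = 0 ∧
    U 0 = Real.sin μ ∧ V 0 = Real.sin μ ∧ Real.sin μ ≠ 0 ∧
    deriv V 0 - deriv U 0 = -μ ^ 2 * Real.sin μ := by
  intro U V
  have hdU : deriv U = fun x => Real.cos ((1 + x) * μ) * μ :=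
    funext fun x => (hasDerivU μ x).deriv
  have hdV : deriv V = fun x => Real.cos ((1 - x) * μ) * (-μ) :=
    funext fun x => (hasDerivV μ x).deriv
  have hsin : Real.sin μ ≠ 0 := by
    intro h
    have hc2 : Real.cos μ ^ 2 = 1 := by
      have := Real.sin_sq_add_cos_sq μ
      rw [h] at this; linarith [this]
    have : (2 * Real.cos μ) ^ 2 = 4 := by nlinarith
    rw [hchar, h] at this
    norm_num at this
  refine ⟨?_, ?_, ?_, ?_, ?_, ?_, hsin, ?_⟩
  · intro x _
    rw [hdU, (hasDerivU' μ x).deriv]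
    simp [U]; ring
  · intro x _
    rw [hdV, (hasDerivV' μ x).deriv]
    simp [V]; ring
  · simp [U]
  · simp [V]
  · simp [U]
  · simp [V]
  · rw [hdU, hdV]
    simp only
    norm_num
    nlinarith [hchar]
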